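/- Let T be a triangulated category and A → B → C → A[1] a distinguished triangle with Hom(A, C[-1]) = 0. If A = A₁ ⊕ A₂ and the component A₁ → B of the first map is zero, then A₁ = 0. Dually, if C = C₁ ⊕ C₂ and the component B → C₁ of the second map is zero, then C₁ = 0. -/

import Mathlib

open CategoryTheory CategoryTheory.Limits CategoryTheory.Pretriangulated

variable {C : Type*} [Category C] [Preadditive C] [HasZeroObject C] [HasShift C ℤ]
  [∀ n : ℤ, (shiftFunctor C n).Additive] [Pretriangulated C] [HasBinaryBiproducts C]

/-- Let `A → B → C → A[1]` be a distinguished triangle with `Hom(A, C[-1]) = 0`.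
If `A = A₁ ⊕ A₂` and the component `A₁ → B` of the first map is zero, then `A₁ = 0`;
dually, if `C = C₁ ⊕ C₂` and the component `B → C₁` of the second map is zero,
then `C₁ = 0`. -/
theorem isZero_summand_of_component_zero
    (T : Triangle C) (hT : T ∈ distTriang C)
    (h : ∀ f : T.obj₁ ⟶ (T.obj₃)⟦(-1 : ℤ)⟧, f = 0) :
    (∀ (A₁ A₂ : C) (e : A₁ ⊞ A₂ ≅ T.obj₁),
        biprod.inl ≫ e.hom ≫ T.mor₁ = 0 → IsZero A₁) ∧
    (∀ (C₁ C₂ : C) (e : T.obj₃ ≅ C₁ ⊞ C₂),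
        T.mor₂ ≫ e.hom ≫ biprod.fst = 0 → IsZero C₁) := by
  -- Key: every map `T.obj₁⟦1⟧ ⟶ T.obj₃` vanishes, by shift adjunction and `h`.
  have hshift : ∀ g : (T.obj₁)⟦(1 : ℤ)⟧ ⟶ T.obj₃, g = 0 := by
    intro g
    have := h ((shiftEquiv C (1 : ℤ)).toAdjunction.homEquiv T.obj₁ T.obj₃ g)
    have hg := congrArg ((shiftEquiv C (1 : ℤ)).toAdjunction.homEquiv T.obj₁ T.obj₃).symm this
    erw [Equiv.symm_apply_apply] at hg
    rw [hg]
    simp [Adjunction.homEquiv]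
    erw [(shiftFunctor C (1 : ℤ)).map_zero, zero_comp]
    rfl
  constructor
  · intro A₁ A₂ e he
    have hf : (biprod.inl ≫ e.hom) ≫ T.invRotate.mor₂ = 0 := by
      exact (Category.assoc _ _ _).trans he
    obtain ⟨g, hg⟩ := Triangle.coyoneda_exact₂ _ (inv_rot_of_distTriang _ hT)
      (biprod.inl ≫ e.hom) hf
    -- `g : A₁ ⟶ T.obj₃⟦-1⟧` must be zero, since `A₁` is a summand of `T.obj₁`.
    have hg0 : g = 0 := by
      have h0 := h (e.inv ≫ biprod.fst ≫ g)
      calc g = biprod.inl ≫ e.hom ≫ (e.inv ≫ biprod.fst ≫ g) := by simp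
        _ = 0 := by erw [h0, comp_zero, comp_zero]
    rw [hg0, zero_comp] at hg
    rw [IsZero.iff_id_eq_zero]
    calc 𝟙 A₁ = (biprod.inl ≫ e.hom) ≫ e.inv ≫ biprod.fst := by simp
      _ = 0 := by erw [hg, zero_comp]
  · intro C₁ C₂ e he
    have hp : T.mor₂ ≫ (e.hom ≫ biprod.fst) = 0 := by simpa using he
    obtain ⟨q, hq⟩ := Triangle.yoneda_exact₃ T hT (e.hom ≫ biprod.fst) hp
    have hq0 : q = 0 := by
      have h0 := hshift (q ≫ biprod.inl ≫ e.inv)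
      calc q = (q ≫ biprod.inl ≫ e.inv) ≫ e.hom ≫ biprod.fst := by simp
        _ = 0 := by rw [h0]; simp
    rw [IsZero.iff_id_eq_zero]
    calc 𝟙 C₁ = (biprod.inl ≫ e.inv) ≫ e.hom ≫ biprod.fst := by simp
      _ = (biprod.inl ≫ e.inv) ≫ T.mor₃ ≫ q := by rw [← hq]
      _ = 0 := by rw [hq0]; simp
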